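/- Let S be a monoid, U a submonoid of S, and d ∈ S. If for every group G and every pair of monoid homomorphisms f, g : S → G with f(u) = g(u) for all u ∈ U one has f(d) = g(d), then for the canonical monoid homomorphism μ : S → G(S) into the universal enveloping group of S, μ(d) lies in the subgroup of G(S) generated by μ(U). -/

import Mathlib

/-- If `d` lies in the weak dominion of a submonoid `U` of a monoid `S`
(any two monoid homomorphisms from `S` to a group agreeing on `U` agree at `d`),
then the image of `d` under the canonical map `μ : S → G(S)` into the universal
enveloping group lies in the subgroup generated by `μ(U)`. -/
theorem weak_dominion_subset_universal_group
    {S : Type} [Monoid S] (U : Submonoid S) (d : S)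
    (GS : Type) [Group GS] (μ : S →* GS)
    (huniv : ∀ (G : Type) [Group G] (f : S →* G),
      ∃! fhat : GS →* G, fhat.comp μ = f)
    (hwd : ∀ (G : Type) [Group G] (f g : S →* G),
      (∀ u ∈ U, f u = g u) → f d = g d) :
    μ d ∈ Subgroup.closure (μ '' (U : Set S)) := by
  classical
  set H := Subgroup.closure (μ '' (U : Set S)) with hH
  set T := GS ⧸ H with hT
  -- permutation representation on Option T
  let ρ : GS →* Equiv.Perm T := MulAction.toPermHom GS T
  let lift : Equiv.Perm T →* Equiv.Perm (Option T) :=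
    { toFun := Equiv.optionCongr
      map_one' := Equiv.optionCongr_one
      map_mul' := fun a b => by ext x; cases x <;> simp [Equiv.Perm.mul_apply] }
  let π : GS →* Equiv.Perm (Option T) := lift.comp ρ
  let e₀ : T := QuotientGroup.mk (1 : GS)
  let σ : Equiv.Perm (Option T) := Equiv.swap none (some e₀)
  have hσσ : σ * σ = 1 := Equiv.swap_mul_self _ _
  have hπ_some : ∀ (x : GS) (t : T), π x (some t) = some (x • t) := fun x t => rfl
  have hπ_none : ∀ (x : GS), π x none = none := fun x => rfl
  -- π h commutes with σ for h ∈ H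
  have hcomm : ∀ h ∈ H, σ * π h * σ = π h := by
    intro h hh
    have hfix : π h (some e₀) = some e₀ := by
      rw [hπ_some]
      congr 1
      show QuotientGroup.mk (h * 1) = QuotientGroup.mk (1 : GS)
      rw [QuotientGroup.eq]
      simpa using (inv_mem hh)
    apply Equiv.ext
    intro x
    show σ (π h (σ x)) = π h x
    rcases x with _ | t
    · rw [show σ none = some e₀ from Equiv.swap_apply_left _ _, hfix,
        show σ (some e₀) = none from Equiv.swap_apply_right _ _, hπ_none]
    · by_cases ht : some t = some e₀
      · rw [ht, show σ (some e₀) = none from Equiv.swap_apply_right _ _, hπ_none,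
          show σ none = some e₀ from Equiv.swap_apply_left _ _, hfix]
      · have h1 : σ (some t) = some t := Equiv.swap_apply_of_ne_of_ne (by simp) ht
        rw [h1]
        have h2 : π h (some t) ≠ none := by rw [hπ_some]; simp
        have h3 : π h (some t) ≠ some e₀ := by
          intro hc
          exact ht ((π h).injective (hc.trans hfix.symm))
        exact Equiv.swap_apply_of_ne_of_ne h2 h3
  -- two monoid homs S → Perm (Option T)
  let f : S →* Equiv.Perm (Option T) := π.comp μ
  let g : S →* Equiv.Perm (Option T) :=
    ((MulAut.conj σ).toMonoidHom.comp π).comp μ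
  have hagree : ∀ u ∈ U, f u = g u := by
    intro u hu
    have hμu : μ u ∈ H := Subgroup.subset_closure ⟨u, hu, rfl⟩
    show π (μ u) = σ * π (μ u) * σ⁻¹
    have : σ⁻¹ = σ := by
      rw [eq_comm, eq_inv_iff_mul_eq_one, hσσ]
    rw [this, hcomm _ hμu]
  have hd := hwd _ f g hagree
  -- evaluate at some e₀
  have := congrArg (fun p : Equiv.Perm (Option T) => p (some e₀)) hd
  simp only [f, g] at this
  have hL : π (μ d) (some e₀) = some ((μ d) • e₀) := hπ_some _ _
  have hR : (σ * π (μ d) * σ⁻¹) (some e₀) = some e₀ := by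
    have hinv : σ⁻¹ = σ := by rw [eq_comm, eq_inv_iff_mul_eq_one, hσσ]
    show σ (π (μ d) (σ⁻¹ (some e₀))) = some e₀
    rw [hinv, show σ (some e₀) = none from Equiv.swap_apply_right _ _, hπ_none,
      show σ none = some e₀ from Equiv.swap_apply_left _ _]
  have this' : π (μ d) (some e₀) = (σ * π (μ d) * σ⁻¹) (some e₀) := this
  have key : some ((μ d) • e₀) = some e₀ := (hL.symm.trans this').trans hR
  have : (μ d) • e₀ = e₀ := Option.some_injective _ key
  have : QuotientGroup.mk ((μ d) * 1) = QuotientGroup.mk (1 : GS) := this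
  rw [QuotientGroup.eq] at this
  simpa using (inv_mem this)
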